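/- Let ε > 0 and let f be holomorphic on the open unit disk 𝔻 with f^#(z) ≥ ε for all z ∈ 𝔻. Then for every r ∈ (0,1), the Nevanlinna characteristic of f satisfies T(r,f) = m(r,f) ≤ m(r, f'/f) + log⁺(1/ε), where m(r,h) = (1/2π)∫₀^{2π} log⁺|h(r e^{iθ})| dθ is the Nevanlinna proximity function and log⁺ t = max(log t, 0). -/

import Mathlib

open Complex Metric Set Filter Topology
open scoped Classical

/-- The spherical derivative of a meromorphic function: `|f'|/(1+|f|²)` at
points where `f` is analytic (finite), and `(1/f)^#` at poles. -/
noncomputable def sphDeriv (f : ℂ → ℂ) (z : ℂ) : ℝ :=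
  if AnalyticAt ℂ f z then ‖deriv f z‖ / (1 + ‖f z‖ ^ 2)
  else ‖deriv (fun w => (f w)⁻¹) z‖ / (1 + ‖(f z)⁻¹‖ ^ 2)

/-- `f` is meromorphic on `D`, normalized so that at every non-analytic point
(i.e. pole) the value of `f` is `0` and the reciprocal `1/f` is analytic
(it is the analytic extension, vanishing at the pole). -/
def MeromorphicNiceOn (f : ℂ → ℂ) (D : Set ℂ) : Prop :=
  MeromorphicOn f D ∧
    ∀ z ∈ D, ¬ AnalyticAt ℂ f z → f z = 0 ∧ AnalyticAt ℂ (fun w => (f w)⁻¹) z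

/-- The chordal (spherical) distance on the Riemann sphere `ℂ ∪ {∞}`. -/
noncomputable def chordalDist : OnePoint ℂ → OnePoint ℂ → ℝ
  | Option.some z, Option.some w =>
      ‖z - w‖ / (Real.sqrt (1 + ‖z‖ ^ 2) * Real.sqrt (1 + ‖w‖ ^ 2))
  | Option.some z, Option.none => 1 / Real.sqrt (1 + ‖z‖ ^ 2)
  | Option.none, Option.some w => 1 / Real.sqrt (1 + ‖w‖ ^ 2)
  | Option.none, Option.none => 0

/-- A meromorphic function viewed as a map into the Riemann sphere: at
non-analytic points (poles) the value is `∞`. -/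
noncomputable def spherify (f : ℂ → ℂ) (z : ℂ) : OnePoint ℂ :=
  if AnalyticAt ℂ f z then (f z : OnePoint ℂ) else OnePoint.infty

/-- Locally uniform convergence on `D` with respect to the chordal metric. -/
def SphTendstoLocallyUniformlyOn (F : ℕ → ℂ → OnePoint ℂ) (g : ℂ → OnePoint ℂ)
    (D : Set ℂ) : Prop :=
  ∀ ε : ℝ, 0 < ε → ∀ z ∈ D, ∃ t ∈ 𝓝[D] z,
    ∀ᶠ n in atTop, ∀ w ∈ t, chordalDist (F n w) (g w) < ε

/-- A family of meromorphic functions is normal on `D` if every sequence has a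
subsequence converging locally uniformly on `D` with respect to the spherical
metric (the limit may take the value `∞`, e.g. be the constant `∞`). -/
def SphNormalOn (𝓕 : Set (ℂ → ℂ)) (D : Set ℂ) : Prop :=
  ∀ F : ℕ → ℂ → ℂ, (∀ n, F n ∈ 𝓕) →
    ∃ φ : ℕ → ℕ, StrictMono φ ∧ ∃ g : ℂ → OnePoint ℂ,
      SphTendstoLocallyUniformlyOn (fun n => spherify (F (φ n))) g D


/-- `log⁺ t = max (log t) 0`. -/
noncomputable def posLog (t : ℝ) : ℝ := max (Real.log t) 0

namespace NevAux
open MeasureTheory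

lemma posLog_nonneg (t : ℝ) : 0 ≤ posLog t := le_max_right _ _

lemma log_le_posLog (t : ℝ) : Real.log t ≤ posLog t := le_max_left _ _

lemma posLog_mono {x y : ℝ} (hx : 0 ≤ x) (h : x ≤ y) : posLog x ≤ posLog y := by
  rcases le_or_gt x 1 with h1 | h1
  · have hx0 : Real.log x ≤ 0 := Real.log_nonpos hx h1
    exact max_le (hx0.trans (le_max_right _ _)) (le_max_right _ _)
  · exact max_le ((Real.log_le_log (lt_trans one_pos h1) h).trans (le_max_left _ _))
      (le_max_right _ _)

lemma posLog_mul {x y : ℝ} (hx : 0 ≤ x) (hy : 0 ≤ y) :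
    posLog (x * y) ≤ posLog x + posLog y := by
  rcases eq_or_lt_of_le hx with rfl | hx0
  · simp [posLog, Real.log_zero]
  rcases eq_or_lt_of_le hy with rfl | hy0
  · simp [posLog, Real.log_zero]
  refine max_le ?_ (add_nonneg (posLog_nonneg _) (posLog_nonneg _))
  rw [Real.log_mul (ne_of_gt hx0) (ne_of_gt hy0)]
  exact add_le_add (log_le_posLog _) (log_le_posLog _)

lemma posLog_inv_le_abs_log (x : ℝ) : posLog x⁻¹ ≤ |Real.log x| := by
  refine max_le ?_ (abs_nonneg _)
  rw [Real.log_inv]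
  exact neg_le_abs _

lemma integrableOn_neg_log_right (c : ℝ) :
    IntegrableOn (fun x => -Real.log (x - c)) (Ioc c (c + 1)) := by
  have hcont : ContinuousOn (fun x : ℝ => (x - c) - (x - c) * Real.log (x - c))
      (Icc c (c + 1)) := by
    apply Continuous.continuousOn
    exact (continuous_id.sub continuous_const).sub
      (Real.continuous_mul_log.comp (continuous_id.sub continuous_const))
  have hderiv : ∀ x ∈ Ioo c (c + 1),
      HasDerivAt (fun x : ℝ => (x - c) - (x - c) * Real.log (x - c))
        (-Real.log (x - c)) x := by
    intro x hx
    have hxc : x - c ≠ 0 := ne_of_gt (sub_pos.mpr hx.1)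
    have h1 : HasDerivAt (fun x : ℝ => x - c) 1 x := (hasDerivAt_id x).sub_const c
    have h2 : HasDerivAt (fun y : ℝ => y * Real.log y) (Real.log (x - c) + 1) (x - c) :=
      Real.hasDerivAt_mul_log hxc
    have h4 := h1.sub (h2.comp x h1)
    exact h4.congr_deriv (by ring)
  have hpos : ∀ x ∈ Ioo c (c + 1), 0 ≤ -Real.log (x - c) := by
    intro x hx
    have : Real.log (x - c) ≤ 0 :=
      Real.log_nonpos (le_of_lt (sub_pos.mpr hx.1)) (by linarith [hx.2])
    linarith
  exact intervalIntegral.integrableOn_deriv_of_nonneg hcont hderiv hpos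

lemma integrableOn_neg_log_left (c : ℝ) :
    IntegrableOn (fun x => -Real.log (c - x)) (Ioc (c - 1) c) := by
  have hcont : ContinuousOn (fun x : ℝ => (c - x) * Real.log (c - x) - (c - x))
      (Icc (c - 1) c) := by
    apply Continuous.continuousOn
    exact (Real.continuous_mul_log.comp (continuous_const.sub continuous_id)).sub
      (continuous_const.sub continuous_id)
  have hderiv : ∀ x ∈ Ioo (c - 1) c,
      HasDerivAt (fun x : ℝ => (c - x) * Real.log (c - x) - (c - x))
        (-Real.log (c - x)) x := by
    intro x hx
    have hxc : c - x ≠ 0 := ne_of_gt (sub_pos.mpr hx.2)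
    have h1 : HasDerivAt (fun x : ℝ => c - x) (-1) x := by
      simpa using (hasDerivAt_id x).const_sub c
    have h2 : HasDerivAt (fun y : ℝ => y * Real.log y) (Real.log (c - x) + 1) (c - x) :=
      Real.hasDerivAt_mul_log hxc
    have h4 := (h2.comp x h1).sub h1
    exact h4.congr_deriv (by ring)
  have hpos : ∀ x ∈ Ioo (c - 1) c, 0 ≤ -Real.log (c - x) := by
    intro x hx
    have : Real.log (c - x) ≤ 0 :=
      Real.log_nonpos (le_of_lt (sub_pos.mpr hx.2)) (by linarith [hx.1])
    linarith
  exact intervalIntegral.integrableOn_deriv_of_nonneg hcont hderiv hpos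

lemma integrableOn_abs_log_abs_sub (c : ℝ) :
    IntegrableOn (fun x => |Real.log (|x - c|)|) (Icc (c - 1) (c + 1)) := by
  rw [integrableOn_Icc_iff_integrableOn_Ioc]
  have hsplit : Ioc (c - 1) (c + 1) = Ioc (c - 1) c ∪ Ioc c (c + 1) :=
    (Ioc_union_Ioc_eq_Ioc (by linarith) (by linarith)).symm
  rw [hsplit]
  apply MeasureTheory.IntegrableOn.union
  · refine (integrableOn_neg_log_left c).congr_fun (fun x hx => ?_) measurableSet_Ioc
    rcases eq_or_lt_of_le hx.2 with rfl | hxc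
    · simp
    · have h1 : |x - c| = c - x := by rw [abs_sub_comm]; exact abs_of_pos (sub_pos.mpr hxc)
      rw [h1, abs_of_nonpos (Real.log_nonpos (by linarith) (by linarith [hx.1]))]
  · refine (integrableOn_neg_log_right c).congr_fun (fun x hx => ?_) measurableSet_Ioc
    have h1 : |x - c| = x - c := abs_of_pos (sub_pos.mpr hx.1)
    rw [h1, abs_of_nonpos (Real.log_nonpos (by linarith [hx.1]) (by linarith [hx.2]))]

lemma measurable_posLog_norm_div {A B : ℝ → ℂ} (hA : Continuous A) (hB : Continuous B) :
    Measurable fun θ => posLog ‖B θ / A θ‖ := by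
  unfold posLog
  exact (Real.measurable_log.comp (hB.measurable.div hA.measurable).norm).max measurable_const

/-- Local integrability of `log⁺ ‖B/A‖` near any point, provided `A` either is nonzero
or vanishes with nonzero derivative. -/
lemma integrableAtFilter_posLog_div_ne {A B : ℝ → ℂ} (hA : Continuous A) (hB : Continuous B)
    (θ₀ : ℝ) (h0 : A θ₀ ≠ 0) :
    IntegrableAtFilter (fun θ => posLog ‖B θ / A θ‖) (𝓝 θ₀) := by
    have hq : ContinuousAt (fun θ => ‖B θ / A θ‖) θ₀ :=
      ((hB.continuousAt.div hA.continuousAt h0).norm)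
    have hev : ∀ᶠ θ in 𝓝 θ₀, ‖B θ / A θ‖ < ‖B θ₀ / A θ₀‖ + 1 :=
      Filter.Tendsto.eventually_lt_const (lt_add_one _) hq
    obtain ⟨δ, hδpos, hδ⟩ := Metric.eventually_nhds_iff.mp hev
    refine ⟨Icc (θ₀ - δ/2) (θ₀ + δ/2), Icc_mem_nhds (by linarith) (by linarith), ?_⟩
    apply MeasureTheory.Integrable.mono'
      (integrableOn_const measure_Icc_lt_top.ne)
      ((measurable_posLog_norm_div hA hB).aestronglyMeasurable.restrict)
      (g := fun _ => posLog (‖B θ₀ / A θ₀‖ + 1))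
    filter_upwards [ae_restrict_mem measurableSet_Icc] with θ hθ
    rw [Real.norm_eq_abs, _root_.abs_of_nonneg (posLog_nonneg _)]
    have hd : dist θ θ₀ < δ := by
      rw [Real.dist_eq, abs_sub_lt_iff]
      constructor <;> [linarith [hθ.2]; linarith [hθ.1]]
    exact posLog_mono (norm_nonneg _) (hδ hd).le

lemma integrableAtFilter_posLog_div {A B : ℝ → ℂ} (hA : Continuous A) (hB : Continuous B)
    (θ₀ : ℝ) (h : A θ₀ ≠ 0 ∨ ∃ a, a ≠ 0 ∧ HasDerivAt A a θ₀) :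
    IntegrableAtFilter (fun θ => posLog ‖B θ / A θ‖) (𝓝 θ₀) := by
  rcases h with h0 | ⟨a, ha, hA'⟩
  · exact integrableAtFilter_posLog_div_ne hA hB θ₀ h0
  · by_cases h0 : A θ₀ ≠ 0
    · exact integrableAtFilter_posLog_div_ne hA hB θ₀ h0
    push_neg at h0
    have hana : (0:ℝ) < ‖a‖ := norm_pos_iff.mpr ha
    have hlo := hasDerivAt_iff_isLittleO.mp hA'
    have hev1 : ∀ᶠ θ in 𝓝 θ₀, ‖A θ - A θ₀ - (θ - θ₀) • a‖ ≤ ‖a‖/2 * ‖θ - θ₀‖ :=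
      Asymptotics.isLittleO_iff.mp hlo (by positivity)
    have hev2 : ∀ᶠ θ in 𝓝 θ₀, ‖B θ‖ < ‖B θ₀‖ + 1 :=
      Filter.Tendsto.eventually_lt_const (lt_add_one _) hB.continuousAt.norm
    obtain ⟨δ, hδpos, hδ⟩ := Metric.eventually_nhds_iff.mp (hev1.and hev2)
    set δ' := min (δ/2) 1 with hδ'def
    have hδ'pos : 0 < δ' := lt_min (by linarith) one_pos
    have hδ'le1 : δ' ≤ 1 := min_le_right _ _
    have hδ'leδ : δ' < δ := lt_of_le_of_lt (min_le_left _ _) (by linarith)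
    refine ⟨Icc (θ₀ - δ') (θ₀ + δ'), Icc_mem_nhds (by linarith) (by linarith), ?_⟩
    set M : ℝ := ‖B θ₀‖ + 1 with hMdef
    have hM : (0:ℝ) < M := by positivity
    have hgint : IntegrableOn
        (fun θ => posLog (2 * M / ‖a‖) + |Real.log (|θ - θ₀|)|) (Icc (θ₀ - δ') (θ₀ + δ')) := by
      apply MeasureTheory.Integrable.add
      · exact integrableOn_const measure_Icc_lt_top.ne
      · exact (integrableOn_abs_log_abs_sub θ₀).mono_set
          (Icc_subset_Icc (by linarith) (by linarith))
    apply MeasureTheory.Integrable.mono' hgint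
      ((measurable_posLog_norm_div hA hB).aestronglyMeasurable.restrict)
    have hne0 : ∀ᵐ θ : ℝ, θ ≠ θ₀ := by
      rw [MeasureTheory.ae_iff]
      simpa [not_not, Set.setOf_eq_eq_singleton] using measure_singleton θ₀
    filter_upwards [ae_restrict_mem measurableSet_Icc, ae_restrict_of_ae hne0]
      with θ hθ hθne
    have hdist : dist θ θ₀ < δ := by
      rw [Real.dist_eq, abs_sub_lt_iff]
      constructor <;> [linarith [hθ.2, hδ'leδ]; linarith [hθ.1, hδ'leδ]]
    obtain ⟨hb1, hb2⟩ := hδ hdist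
    rw [h0, sub_zero] at hb1
    have habs : 0 < |θ - θ₀| := abs_pos.mpr (sub_ne_zero.mpr hθne)
    have hlb : ‖a‖/2 * |θ - θ₀| ≤ ‖A θ‖ := by
      have h5 : |‖A θ‖ - ‖(θ - θ₀) • a‖| ≤ ‖A θ - (θ - θ₀) • a‖ :=
        abs_norm_sub_norm_le _ _
      have h6 : ‖(θ - θ₀) • a‖ = |θ - θ₀| * ‖a‖ := by
        rw [norm_smul, Real.norm_eq_abs]
      rw [Real.norm_eq_abs] at hb1
      have h7 := (abs_le.mp h5).1
      rw [h6] at h7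
      nlinarith
    have hAne : ‖A θ‖ > 0 := lt_of_lt_of_le (by positivity) hlb
    rw [Real.norm_eq_abs, _root_.abs_of_nonneg (posLog_nonneg _)]
    calc posLog ‖B θ / A θ‖ ≤ posLog ((2 * M / ‖a‖) * |θ - θ₀|⁻¹) := by
          apply posLog_mono (norm_nonneg _)
          rw [norm_div]
          have heq : (2 * M / ‖a‖) * |θ - θ₀|⁻¹ = M / (‖a‖/2 * |θ - θ₀|) := by
            field_simp
          rw [heq]
          exact div_le_div₀ hM.le hb2.le (by positivity) hlb
      _ ≤ posLog (2 * M / ‖a‖) + posLog |θ - θ₀|⁻¹ :=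
          posLog_mul (by positivity) (by positivity)
      _ ≤ posLog (2 * M / ‖a‖) + |Real.log (|θ - θ₀|)| :=
          add_le_add_right (posLog_inv_le_abs_log _) _

end NevAux

/-- The Nevanlinna proximity function
`m(r,h) = (1/2π) ∫₀^{2π} log⁺ |h(r e^{iθ})| dθ`. -/
noncomputable def proximity (h : ℂ → ℂ) (r : ℝ) : ℝ :=
  (2 * Real.pi)⁻¹ *
    ∫ θ in (0 : ℝ)..(2 * Real.pi), posLog ‖h ((r : ℂ) * Complex.exp ((θ : ℂ) * Complex.I))‖

/-- The Nevanlinna characteristic of a function holomorphic on `𝔻`: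
`T(r,f) = m(r,f)` (the counting function of poles vanishes). -/
noncomputable def nevanlinnaT (f : ℂ → ℂ) (r : ℝ) : ℝ := proximity f r

/-- If `f` is holomorphic on `𝔻` with `f^# ≥ ε` everywhere, then
for all `0 < r < 1`:  `T(r,f) = m(r,f) ≤ m(r, f'/f) + log⁺(1/ε)`. -/
theorem nevanlinnaT_le (ε : ℝ) (hε : 0 < ε) (f : ℂ → ℂ)
    (hf : DifferentiableOn ℂ f (ball (0 : ℂ) 1))
    (hsph : ∀ z ∈ ball (0 : ℂ) 1, ε ≤ sphDeriv f z)
    (r : ℝ) (hr : r ∈ Set.Ioo (0 : ℝ) 1) :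
    nevanlinnaT f r = proximity f r ∧
      nevanlinnaT f r ≤ proximity (fun z => deriv f z / f z) r + posLog (1 / ε) := by
  obtain ⟨hr0, hr1⟩ := hr
  have hmem : ∀ θ : ℝ, (r : ℂ) * Complex.exp ((θ : ℂ) * Complex.I) ∈ ball (0 : ℂ) 1 := by
    intro θ
    rw [mem_ball_zero_iff]
    have hn : ‖(r : ℂ) * Complex.exp ((θ : ℂ) * Complex.I)‖ = r := by
      rw [norm_mul, Complex.norm_real, Complex.norm_exp, Real.norm_eq_abs,
        _root_.abs_of_pos hr0]
      simp [Complex.mul_re]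
    rw [hn]; exact hr1
  have hAnal : ∀ z ∈ ball (0:ℂ) 1, AnalyticAt ℂ f z := fun z hz =>
    hf.analyticAt (isOpen_ball.mem_nhds hz)
  have hkey : ∀ z ∈ ball (0:ℂ) 1, ε * (1 + ‖f z‖^2) ≤ ‖deriv f z‖ := by
    intro z hz
    have h := hsph z hz
    rw [sphDeriv, if_pos (hAnal z hz)] at h
    have hb : (0:ℝ) < 1 + ‖f z‖^2 := by positivity
    rw [le_div_iff₀ hb] at h
    exact h
  have hdne : ∀ z ∈ ball (0:ℂ) 1, deriv f z ≠ 0 := by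
    intro z hz h0
    have := hkey z hz
    rw [h0, norm_zero] at this
    nlinarith [sq_nonneg ‖f z‖]
  have hpt : ∀ θ : ℝ, posLog ‖f ((r:ℂ) * Complex.exp ((θ:ℂ) * Complex.I))‖ ≤
      posLog ‖deriv f ((r:ℂ) * Complex.exp ((θ:ℂ) * Complex.I)) /
        f ((r:ℂ) * Complex.exp ((θ:ℂ) * Complex.I))‖ + posLog (1/ε) := by
    intro θ
    set z := (r:ℂ) * Complex.exp ((θ:ℂ) * Complex.I) with hz_def
    have hz := hmem θ
    rcases le_or_gt ‖f z‖ 1 with h1 | h1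
    · have h2 : posLog ‖f z‖ = 0 := max_eq_right (Real.log_nonpos (norm_nonneg _) h1)
      rw [h2]
      exact add_nonneg (NevAux.posLog_nonneg _) (NevAux.posLog_nonneg _)
    · have hfz : f z ≠ 0 := by
        intro h0; rw [h0, norm_zero] at h1; linarith
      have hq : ε * ‖f z‖ ≤ ‖deriv f z / f z‖ := by
        rw [norm_div, le_div_iff₀ (norm_pos_iff.mpr hfz)]
        nlinarith [hkey z hz, sq_nonneg ‖f z‖, norm_nonneg (f z)]
      have h2 : posLog ‖f z‖ = Real.log ‖f z‖ := max_eq_left (Real.log_nonneg h1.le)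
      rw [h2]
      have h3 : Real.log ‖f z‖ = Real.log (ε * ‖f z‖) + Real.log (1/ε) := by
        rw [Real.log_mul (ne_of_gt hε) (by positivity), one_div, Real.log_inv]; ring
      rw [h3]
      exact add_le_add ((Real.log_le_log (by positivity) hq).trans (NevAux.log_le_posLog _))
        (NevAux.log_le_posLog _)
  have hccont : Continuous fun θ : ℝ => (r:ℂ) * Complex.exp ((θ:ℂ) * Complex.I) :=
    continuous_const.mul
      (Complex.continuous_exp.comp (Complex.continuous_ofReal.mul continuous_const))
  have hfc : Continuous fun θ : ℝ => f ((r:ℂ) * Complex.exp ((θ:ℂ) * Complex.I)) :=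
    hf.continuousOn.comp_continuous hccont hmem
  have hdcont : ContinuousOn (deriv f) (ball (0:ℂ) 1) :=
    ((hf.analyticOnNhd isOpen_ball).deriv).continuousOn
  have hdc : Continuous fun θ : ℝ => deriv f ((r:ℂ) * Complex.exp ((θ:ℂ) * Complex.I)) :=
    hdcont.comp_continuous hccont hmem
  have hzero : ∀ θ₀ : ℝ, ∃ a, a ≠ 0 ∧
      HasDerivAt (fun θ : ℝ => f ((r:ℂ) * Complex.exp ((θ:ℂ) * Complex.I))) a θ₀ := by
    intro θ₀
    have hd2 : HasDerivAt f (deriv f ((r:ℂ) * Complex.exp ((θ₀:ℂ) * Complex.I)))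
        ((r:ℂ) * Complex.exp ((θ₀:ℂ) * Complex.I)) :=
      ((hAnal _ (hmem θ₀)).differentiableAt).hasDerivAt
    have hb : HasDerivAt (fun w : ℂ => w * Complex.I) Complex.I ((θ₀:ℂ)) :=
      hasDerivAt_mul_const _
    have he : HasDerivAt (fun w : ℂ => (r:ℂ) * Complex.exp (w * Complex.I))
        ((r:ℂ) * (Complex.exp ((θ₀:ℂ) * Complex.I) * Complex.I)) (θ₀:ℂ) := by
      have h5 := ((Complex.hasDerivAt_exp ((θ₀:ℂ) * Complex.I)).comp (θ₀:ℂ) hb).const_mul (r:ℂ)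
      simpa [Function.comp] using h5
    have hH := hd2.comp (θ₀:ℂ) he
    have hA : HasDerivAt (fun θ : ℝ => f ((r:ℂ) * Complex.exp ((θ:ℂ) * Complex.I)))
        (deriv f ((r:ℂ) * Complex.exp ((θ₀:ℂ) * Complex.I)) *
          ((r:ℂ) * (Complex.exp ((θ₀:ℂ) * Complex.I) * Complex.I))) θ₀ := by
      have h6 := hH.comp_ofReal
      simpa [Function.comp] using h6
    refine ⟨_, ?_, hA⟩
    apply mul_ne_zero (hdne _ (hmem θ₀))
    apply mul_ne_zero
    · exact_mod_cast ne_of_gt hr0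
    · exact mul_ne_zero (Complex.exp_ne_zero _) Complex.I_ne_zero
  have I2 : MeasureTheory.IntegrableOn
      (fun θ : ℝ => posLog ‖deriv f ((r:ℂ) * Complex.exp ((θ:ℂ) * Complex.I)) /
        f ((r:ℂ) * Complex.exp ((θ:ℂ) * Complex.I))‖) (Icc 0 (2*Real.pi)) := by
    apply MeasureTheory.LocallyIntegrableOn.integrableOn_isCompact _ isCompact_Icc
    intro x _
    exact (NevAux.integrableAtFilter_posLog_div hfc hdc x (Or.inr (hzero x))).filter_mono
      nhdsWithin_le_nhds
  have hπ : (0:ℝ) < 2 * Real.pi := by positivity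
  have I2' : IntervalIntegrable
      (fun θ : ℝ => posLog ‖deriv f ((r:ℂ) * Complex.exp ((θ:ℂ) * Complex.I)) /
        f ((r:ℂ) * Complex.exp ((θ:ℂ) * Complex.I))‖) MeasureTheory.volume 0 (2*Real.pi) := by
    rw [intervalIntegrable_iff_integrableOn_Ioc_of_le hπ.le]
    exact I2.mono_set Ioc_subset_Icc_self
  obtain ⟨Mf, hMf⟩ := isCompact_Icc.exists_bound_of_continuousOn
    (s := Icc (0:ℝ) (2*Real.pi)) hfc.continuousOn
  have I1 : IntervalIntegrable
      (fun θ : ℝ => posLog ‖f ((r:ℂ) * Complex.exp ((θ:ℂ) * Complex.I))‖)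
      MeasureTheory.volume 0 (2*Real.pi) := by
    rw [intervalIntegrable_iff_integrableOn_Ioc_of_le hπ.le]
    have hmeas : Measurable
        (fun θ : ℝ => posLog ‖f ((r:ℂ) * Complex.exp ((θ:ℂ) * Complex.I))‖) := by
      unfold posLog
      exact (Real.measurable_log.comp hfc.measurable.norm).max measurable_const
    apply MeasureTheory.Integrable.mono' (g := fun _ => posLog Mf)
      (MeasureTheory.integrableOn_const measure_Ioc_lt_top.ne)
      hmeas.aestronglyMeasurable.restrict
    filter_upwards [MeasureTheory.ae_restrict_mem measurableSet_Ioc] with θ hθ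
    rw [Real.norm_eq_abs, _root_.abs_of_nonneg (NevAux.posLog_nonneg _)]
    exact NevAux.posLog_mono (norm_nonneg _) (hMf θ (Ioc_subset_Icc_self hθ))
  refine ⟨rfl, ?_⟩
  have hmono := intervalIntegral.integral_mono_on hπ.le I1
    (I2'.add intervalIntegrable_const) (fun θ _ => hpt θ)
  rw [intervalIntegral.integral_add I2' intervalIntegrable_const,
    intervalIntegral.integral_const] at hmono
  have h4 := mul_le_mul_of_nonneg_left hmono
    (by positivity : (0:ℝ) ≤ (2*Real.pi)⁻¹)
  calc nevanlinnaT f r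
      = (2*Real.pi)⁻¹ * ∫ θ in (0:ℝ)..(2*Real.pi),
          posLog ‖f ((r:ℂ) * Complex.exp ((θ:ℂ) * Complex.I))‖ := rfl
    _ ≤ (2*Real.pi)⁻¹ * ((∫ θ in (0:ℝ)..(2*Real.pi),
          posLog ‖deriv f ((r:ℂ) * Complex.exp ((θ:ℂ) * Complex.I)) /
            f ((r:ℂ) * Complex.exp ((θ:ℂ) * Complex.I))‖) +
          (2*Real.pi - 0) • posLog (1/ε)) := h4
    _ = (2*Real.pi)⁻¹ * (∫ θ in (0:ℝ)..(2*Real.pi),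
          posLog ‖deriv f ((r:ℂ) * Complex.exp ((θ:ℂ) * Complex.I)) /
            f ((r:ℂ) * Complex.exp ((θ:ℂ) * Complex.I))‖) + posLog (1/ε) := by
        rw [smul_eq_mul, sub_zero, mul_add, ← mul_assoc, inv_mul_cancel₀ hπ.ne', one_mul]
    _ = proximity (fun z => deriv f z / f z) r + posLog (1/ε) := rfl
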